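/- Lemma 3.2(c): for every α ∈ (0,1), every partition 0 = t_0 < ⋯ < t_N = T, every 1 ≤ n ≤ N, and every integer m with 0 ≤ m ≤ ⌊1/α⌋, one has Σ_{j=1}^{n} P^{n,j}_α · k_{1+mα−α}(t_j) ≤ k_{1+mα}(t_n). -/

import Mathlib

open Finset intervalIntegral MeasureTheory

/-- The kernel `k_β(s) = s^(β-1)/Γ(β)`. -/
noncomputable def kker (β s : ℝ) : ℝ := s ^ (β - 1) / Real.Gamma β

lemma kker_nonneg {β s : ℝ} (hβ : 0 < β) (hs : 0 ≤ s) : 0 ≤ kker β s :=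
  div_nonneg (Real.rpow_nonneg hs _) (Real.Gamma_pos_of_pos hβ).le

lemma kker_pos {β s : ℝ} (hβ : 0 < β) (hs : 0 < s) : 0 < kker β s :=
  div_pos (Real.rpow_pos_of_pos hs _) (Real.Gamma_pos_of_pos hβ)

lemma kker_zero {β : ℝ} (hβ : β ≠ 1) : kker β 0 = 0 := by
  unfold kker
  rw [Real.zero_rpow (by intro h; apply hβ; linarith [sub_eq_zero.mp h])]
  simp

lemma kker_anti {β x y : ℝ} (hβ0 : 0 < β) (hβ : β ≤ 1) (hx : 0 < x) (hxy : x ≤ y) :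
    kker β y ≤ kker β x := by
  unfold kker
  exact div_le_div_of_nonneg_right (Real.rpow_le_rpow_of_nonpos hx hxy (by linarith))
    (Real.Gamma_pos_of_pos hβ0).le

lemma kker_mvt {β a b : ℝ} (hβ : 0 < β) (ha : 0 ≤ a) (hab : a < b) :
    ∃ ξ ∈ Set.Ioo a b, kker (1 + β) b - kker (1 + β) a = kker β ξ * (b - a) := by
  have hΓpos := Real.Gamma_pos_of_pos hβ
  have hΓ : Real.Gamma (1 + β) = β * Real.Gamma β := by
    rw [add_comm, Real.Gamma_add_one hβ.ne']
  set f : ℝ → ℝ := fun x => x ^ β / Real.Gamma (1 + β) with hf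
  have hcont : ContinuousOn f (Set.Icc a b) := by
    apply ContinuousOn.div_const
    exact fun x hx => (Real.continuousAt_rpow_const x β (Or.inr hβ.le)).continuousWithinAt
  have hderiv : ∀ x ∈ Set.Ioo a b, HasDerivAt f (kker β x) x := by
    intro x hx
    have hx0 : 0 < x := lt_of_le_of_lt ha hx.1
    have h := (Real.hasDerivAt_rpow_const (x := x) (p := β) (Or.inl hx0.ne')).div_const
      (Real.Gamma (1 + β))
    refine h.congr_deriv ?_
    unfold kker
    rw [hΓ]
    field_simp
  obtain ⟨ξ, hξ, h⟩ := exists_hasDerivAt_eq_slope f _ hab hcont hderiv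
  refine ⟨ξ, hξ, ?_⟩
  have h1 : kker (1 + β) b = f b := by unfold kker; rw [hf]; simp [add_sub_cancel_left]
  have h2 : kker (1 + β) a = f a := by unfold kker; rw [hf]; simp [add_sub_cancel_left]
  rw [h1, h2, h]
  rw [div_mul_cancel₀ _ (sub_ne_zero.mpr hab.ne')]


lemma real_beta {p q : ℝ} (hp : 0 < p) (hq : 0 < q) :
    ∫ x in (0:ℝ)..1, x ^ (p - 1) * (1 - x) ^ (q - 1) =
      Real.Gamma p * Real.Gamma q / Real.Gamma (p + q) := by
  have hpq : 0 < Real.Gamma (p + q) := Real.Gamma_pos_of_pos (by linarith)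
  have h := Complex.Gamma_mul_Gamma_eq_betaIntegral (s := (p:ℂ)) (t := (q:ℂ))
    (by simpa using hp) (by simpa using hq)
  have hbeta : Complex.betaIntegral p q =
      ((∫ x in (0:ℝ)..1, x ^ (p - 1) * (1 - x) ^ (q - 1) : ℝ) : ℂ) := by
    rw [Complex.betaIntegral, ← intervalIntegral.integral_ofReal]
    apply intervalIntegral.integral_congr
    intro x hx
    rw [Set.uIcc_of_le (by norm_num : (0:ℝ) ≤ 1)] at hx
    obtain ⟨hx0, hx1⟩ := hx
    dsimp only
    rw [show ((p:ℂ) - 1) = ((p - 1 : ℝ) : ℂ) by push_cast; ring,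
      show ((q:ℂ) - 1) = ((q - 1 : ℝ) : ℂ) by push_cast; ring,
      show (1 - (x:ℂ)) = ((1 - x : ℝ) : ℂ) by push_cast; ring,
      ← Complex.ofReal_cpow hx0, ← Complex.ofReal_cpow (by linarith), ← Complex.ofReal_mul]
  rw [hbeta] at h
  have h2 : ((Real.Gamma p * Real.Gamma q : ℝ) : ℂ) =
      ((Real.Gamma (p + q) * ∫ x in (0:ℝ)..1, x ^ (p - 1) * (1 - x) ^ (q - 1) : ℝ) : ℂ) := by
    push_cast
    rw [← Complex.Gamma_ofReal, ← Complex.Gamma_ofReal, ← Complex.Gamma_ofReal] at *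
    convert h using 2
    push_cast
    ring
  have h3 := Complex.ofReal_inj.mp h2
  field_simp
  linarith [h3]

lemma conv_integral {α β τ : ℝ} (hα0 : 0 < α) (hα1 : α < 1) (hβ : 0 < β) (hτ : 0 < τ) :
    ∫ s in (0:ℝ)..τ, kker (1 - α) (τ - s) * kker β s = kker (1 + β - α) τ := by
  have hΓ1 : 0 < Real.Gamma (1 - α) := Real.Gamma_pos_of_pos (by linarith)
  have hΓ2 : 0 < Real.Gamma β := Real.Gamma_pos_of_pos hβ
  have key : ∫ s in (0:ℝ)..τ, (τ - s) ^ (-α) * s ^ (β - 1) =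
      τ ^ (β - α) * (Real.Gamma β * Real.Gamma (1 - α) / Real.Gamma (β + (1 - α))) := by
    have hsub := intervalIntegral.integral_comp_mul_left (a := (0:ℝ)) (b := 1)
      (fun s => (τ - s) ^ (-α) * s ^ (β - 1)) hτ.ne'
    rw [mul_zero, mul_one] at hsub
    have hcongr : ∫ x in (0:ℝ)..1, (τ - τ * x) ^ (-α) * (τ * x) ^ (β - 1)
        = τ ^ (β - 1 - α) * ∫ x in (0:ℝ)..1, x ^ (β - 1) * (1 - x) ^ (-α) := by
      rw [← intervalIntegral.integral_const_mul]
      apply intervalIntegral.integral_congr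
      intro x hx
      rw [Set.uIcc_of_le (by norm_num : (0:ℝ) ≤ 1)] at hx
      obtain ⟨hx0, hx1⟩ := hx
      dsimp only
      rw [show τ - τ * x = τ * (1 - x) by ring,
        Real.mul_rpow hτ.le (by linarith), Real.mul_rpow hτ.le hx0,
        show τ ^ (β - 1 - α) = τ ^ (-α) * τ ^ (β - 1) by
          rw [← Real.rpow_add hτ]; ring_nf]
      ring
    have hB : ∫ x in (0:ℝ)..1, x ^ (β - 1) * (1 - x) ^ (-α)
        = Real.Gamma β * Real.Gamma (1 - α) / Real.Gamma (β + (1 - α)) := by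
      have := real_beta hβ (by linarith : (0:ℝ) < 1 - α)
      rw [show (1 : ℝ) - α - 1 = -α by ring] at this
      exact this
    rw [hcongr, hB] at hsub
    have := hsub.symm
    rw [smul_eq_mul] at this
    have h4 := (inv_mul_eq_iff_eq_mul₀ hτ.ne').mp this
    have hmul : τ * τ ^ (β - 1 - α) = τ ^ (β - α) := by
      nth_rewrite 1 [← Real.rpow_one τ]
      rw [← Real.rpow_add hτ]
      ring_nf
    rw [h4, ← mul_assoc, hmul]
  unfold kker
  have hconst : ∀ s : ℝ, (τ - s) ^ ((1 - α) - 1) / Real.Gamma (1 - α) * (s ^ (β - 1) / Real.Gamma β)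
      = ((τ - s) ^ (-α) * s ^ (β - 1)) * (1 / (Real.Gamma (1 - α) * Real.Gamma β)) := by
    intro s
    rw [show (1:ℝ) - α - 1 = -α by ring]
    field_simp
  simp_rw [hconst]
  rw [intervalIntegral.integral_mul_const, key]
  rw [show (1:ℝ) + β - α - 1 = β - α by ring,
    show β + (1 - α) = 1 + β - α by ring]
  have hΓ3 : 0 < Real.Gamma (1 + β - α) := Real.Gamma_pos_of_pos (by linarith)
  field_simp

lemma conv_integrable {α β τ : ℝ} (hα0 : 0 < α) (hα1 : α < 1) (hβ : 0 < β) (hτ : 0 < τ)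
    {a b : ℝ} (ha : 0 ≤ a) (hab : a ≤ b) (hb : b ≤ τ) :
    IntervalIntegrable (fun s => kker (1 - α) (τ - s) * kker β s) volume a b := by
  have hF : IntervalIntegrable (fun s => (τ - s) ^ (-α) * s ^ (β - 1)) volume 0 τ := by
    have h1 : IntervalIntegrable (fun s => (τ - s) ^ (-α) * s ^ (β - 1)) volume 0 (τ / 2) := by
      have hint : IntervalIntegrable (fun s : ℝ => s ^ (β - 1)) volume 0 (τ / 2) :=
        intervalIntegrable_rpow' (by linarith)
      have hcont : ContinuousOn (fun s : ℝ => (τ - s) ^ (-α)) (Set.uIcc 0 (τ / 2)) := by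
        apply ContinuousOn.rpow_const (continuous_const.sub continuous_id).continuousOn
        intro x hx
        rw [Set.uIcc_of_le (by linarith)] at hx
        left
        simp only [Pi.sub_apply, id_eq]
        intro hc
        nlinarith [hx.1, hx.2]
      exact hint.continuousOn_mul hcont
    have h2 : IntervalIntegrable (fun s => (τ - s) ^ (-α) * s ^ (β - 1)) volume (τ / 2) τ := by
      have hint : IntervalIntegrable (fun s : ℝ => (τ - s) ^ (-α)) volume (τ / 2) τ := by
        have h := (intervalIntegrable_rpow' (r := -α) (by linarith)
          (a := 0) (b := τ / 2)).comp_sub_left τ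
        have e1 : τ - τ / 2 = τ / 2 := by ring
        have e2 : τ - 0 = τ := by ring
        rw [e1, e2] at h
        exact h.symm
      have hcont : ContinuousOn (fun s : ℝ => s ^ (β - 1)) (Set.uIcc (τ / 2) τ) := by
        apply ContinuousOn.rpow_const continuousOn_id
        intro x hx
        rw [Set.uIcc_of_le (by linarith)] at hx
        left
        simp only [id_eq]
        intro hc
        nlinarith [hx.1]
      exact hint.mul_continuousOn hcont
    exact h1.trans h2
  have heq : (fun s => kker (1 - α) (τ - s) * kker β s)
      = fun s => (1 / (Real.Gamma (1 - α) * Real.Gamma β)) * ((τ - s) ^ (-α) * s ^ (β - 1)) := by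
    funext s
    unfold kker
    rw [show (1:ℝ) - α - 1 = -α by ring]
    field_simp
  rw [heq]
  apply IntervalIntegrable.const_mul
  apply hF.mono_set
  rw [Set.uIcc_of_le hab, Set.uIcc_of_le hτ.le]
  exact Set.Icc_subset_Icc ha hb

lemma integral_kker_phi {α τ a b : ℝ} (hα0 : 0 < α) (hα1 : α < 1)
    (ha : 0 ≤ a) (hab : a ≤ b) (hb : b ≤ τ) :
    ∫ s in a..b, kker (1 - α) (τ - s) = kker (2 - α) (τ - a) - kker (2 - α) (τ - b) := by
  have hΓ : Real.Gamma (2 - α) = (1 - α) * Real.Gamma (1 - α) := by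
    rw [show (2:ℝ) - α = (1 - α) + 1 by ring,
      Real.Gamma_add_one (by intro h; rw [sub_eq_zero] at h; linarith)]
  have hΓ1 : 0 < Real.Gamma (1 - α) := Real.Gamma_pos_of_pos (by linarith)
  unfold kker
  simp_rw [show (1:ℝ) - α - 1 = -α by ring, show (2:ℝ) - α - 1 = -α + 1 by ring]
  rw [intervalIntegral.integral_div,
    intervalIntegral.integral_comp_sub_left (fun s => s ^ (-α)) τ,
    integral_rpow (Or.inl (by linarith)), hΓ]
  rw [show -α + 1 = 1 - α by ring, sub_div]
  have h1α : (1:ℝ) - α ≠ 0 := by intro h; rw [sub_eq_zero] at h; linarith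
  field_simp

lemma integral_kker_w {β a b : ℝ} (hβ : 0 < β) :
    ∫ s in a..b, kker β s = kker (1 + β) b - kker (1 + β) a := by
  unfold kker
  rw [intervalIntegral.integral_div, integral_rpow (Or.inl (by linarith))]
  simp_rw [show β - 1 + 1 = β by ring, show (1:ℝ) + β - 1 = β by ring,
    show Real.Gamma (1 + β) = β * Real.Gamma β by rw [add_comm, Real.Gamma_add_one hβ.ne']]
  have := Real.Gamma_pos_of_pos hβ
  field_simp

lemma per_interval {α β τ a b : ℝ} (hα0 : 0 < α) (hα1 : α < 1) (hβ0 : 0 < β) (hβ1 : β ≤ 1)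
    (ha : 0 ≤ a) (hab : a < b) (hb : b ≤ τ) :
    ∫ s in a..b, kker (1 - α) (τ - s) * kker β s ≤
      ((kker (2 - α) (τ - a) - kker (2 - α) (τ - b)) / (b - a)) *
        (kker (1 + β) b - kker (1 + β) a) := by
  have hτ : 0 < τ := lt_of_lt_of_le (lt_of_le_of_lt ha hab) hb
  obtain ⟨ξ, hξ, hslope⟩ := kker_mvt hβ0 ha hab
  set c := kker β ξ with hc
  have hξ0 : 0 < ξ := lt_of_le_of_lt ha hξ.1
  have hξτ : ξ < τ := lt_of_lt_of_le hξ.2 hb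
  set φ : ℝ → ℝ := fun s => kker (1 - α) (τ - s) with hφ
  set w : ℝ → ℝ := fun s => kker β s with hw
  have hwint : IntervalIntegrable w volume a b := by
    rw [hw]
    unfold kker
    exact (intervalIntegrable_rpow' (by linarith)).div_const _
  have hφint : IntervalIntegrable φ volume a b := by
    rw [hφ]
    unfold kker
    apply IntervalIntegrable.div_const
    have h := (intervalIntegrable_rpow' (r := (1:ℝ) - α - 1) (by
      rw [show (1:ℝ) - α - 1 = -α by ring]; linarith)
      (a := τ - b) (b := τ - a)).comp_sub_left τ
    have e1 : τ - (τ - a) = a := by ring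
    have e2 : τ - (τ - b) = b := by ring
    rw [e1, e2] at h
    exact h.symm
  have hLint : IntervalIntegrable (fun s => φ s * w s) volume a b :=
    conv_integrable hα0 hα1 hβ0 hτ ha hab.le hb
  have hRint : IntervalIntegrable (fun s => φ s * c + φ ξ * (w s - c)) volume a b := by
    apply IntervalIntegrable.add (hφint.mul_const c)
    exact ((hwint.sub (intervalIntegrable_const)).const_mul _)
  have hmono : ∫ s in a..b, φ s * w s ≤ ∫ s in a..b, (φ s * c + φ ξ * (w s - c)) := by
    rw [intervalIntegral.integral_of_le hab.le, intervalIntegral.integral_of_le hab.le,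
      MeasureTheory.integral_Ioc_eq_integral_Ioo, MeasureTheory.integral_Ioc_eq_integral_Ioo]
    apply MeasureTheory.setIntegral_mono_on
    · exact (hLint.1.mono_set Set.Ioo_subset_Ioc_self)
    · exact (hRint.1.mono_set Set.Ioo_subset_Ioc_self)
    · exact measurableSet_Ioo
    · intro x hx
      have hx0 : 0 < x := lt_of_le_of_lt ha hx.1
      have hxτ : x < τ := lt_of_lt_of_le hx.2 hb
      have key : (φ x - φ ξ) * (w x - c) ≤ 0 := by
        rcases le_total x ξ with h | h
        · apply mul_nonpos_of_nonpos_of_nonneg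
          · rw [hφ, sub_nonpos]
            exact kker_anti (by linarith) (by linarith) (by linarith) (by linarith)
          · rw [hw, hc, sub_nonneg]
            exact kker_anti hβ0 hβ1 hx0 h
        · apply mul_nonpos_of_nonneg_of_nonpos
          · rw [hφ, sub_nonneg]
            exact kker_anti (by linarith) (by linarith) (by linarith) (by linarith)
          · rw [hw, hc, sub_nonpos]
            exact kker_anti hβ0 hβ1 hξ0 h
      nlinarith [key]
  have hcomp : ∫ s in a..b, (φ s * c + φ ξ * (w s - c))
      = (kker (2 - α) (τ - a) - kker (2 - α) (τ - b)) * c := by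
    rw [intervalIntegral.integral_add (hφint.mul_const c)
      ((hwint.sub intervalIntegrable_const).const_mul _),
      intervalIntegral.integral_mul_const, intervalIntegral.integral_const_mul,
      intervalIntegral.integral_sub hwint intervalIntegrable_const,
      intervalIntegral.integral_const, integral_kker_w hβ0]
    rw [hφ]
    rw [integral_kker_phi hα0 hα1 ha hab.le hb]
    rw [hslope]
    rw [smul_eq_mul]
    ring
  calc ∫ s in a..b, φ s * w s ≤ ∫ s in a..b, (φ s * c + φ ξ * (w s - c)) := hmono
    _ = (kker (2 - α) (τ - a) - kker (2 - α) (τ - b)) * c := hcomp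
    _ = ((kker (2 - α) (τ - a) - kker (2 - α) (τ - b)) / (b - a)) *
        (kker (1 + β) b - kker (1 + β) a) := by
      rw [hslope]
      field_simp [sub_ne_zero.mpr hab.ne']


/-- The discrete L1 kernels `K^{n,j}_{1-α}`. -/
noncomputable def Kd (α : ℝ) (t : ℕ → ℝ) (n j : ℕ) : ℝ :=
  (kker (2 - α) (t n - t (j - 1)) - kker (2 - α) (t n - t j)) / (t j - t (j - 1))

/-- The complementary discrete kernels `P^{n,i}_α`, defined by downward recursion. -/
noncomputable def Pd (α : ℝ) (t : ℕ → ℝ) (n i : ℕ) : ℝ :=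
  if i = n then 1 / Kd α t n n
  else (1 / Kd α t i i) *
    ∑ j ∈ (Finset.Ioc i n).attach,
      Pd α t n j.1 * (Kd α t j.1 (i + 1) - Kd α t j.1 i)
termination_by n - i
decreasing_by
  have h := Finset.mem_Ioc.mp j.2
  omega

section Discrete

variable {α : ℝ} {t : ℕ → ℝ} {N : ℕ}

lemma Kd_rep (hα0 : 0 < α) (hα1 : α < 1)
    (hlt : ∀ i j : ℕ, i < j → j ≤ N → t i < t j)
    {n j : ℕ} (hj1 : 1 ≤ j) (hjn : j ≤ n) (hnN : n ≤ N) :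
    ∃ ξ ∈ Set.Ioo (t n - t j) (t n - t (j - 1)), Kd α t n j = kker (1 - α) ξ := by
  have h1 : t (j - 1) < t j := hlt (j - 1) j (by omega) (by omega)
  have h2 : t j ≤ t n := by
    rcases eq_or_lt_of_le hjn with h | h
    · rw [h]
    · exact (hlt j n h hnN).le
  have h0 : (0:ℝ) ≤ t n - t j := by linarith
  have hab : t n - t j < t n - t (j - 1) := by linarith
  obtain ⟨ξ, hξ, h⟩ := kker_mvt (β := 1 - α) (by linarith) h0 hab
  refine ⟨ξ, hξ, ?_⟩
  unfold Kd
  rw [show (2:ℝ) - α = 1 + (1 - α) by ring, h,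
    show t n - t (j - 1) - (t n - t j) = t j - t (j - 1) by ring,
    mul_div_cancel_right₀ _ (sub_ne_zero.mpr h1.ne')]

lemma Kd_pos (hα0 : 0 < α) (hα1 : α < 1)
    (hlt : ∀ i j : ℕ, i < j → j ≤ N → t i < t j)
    {n j : ℕ} (hj1 : 1 ≤ j) (hjn : j ≤ n) (hnN : n ≤ N) :
    0 < Kd α t n j := by
  obtain ⟨ξ, hξ, h⟩ := Kd_rep hα0 hα1 hlt hj1 hjn hnN
  have h2 : t j ≤ t n := by
    rcases eq_or_lt_of_le hjn with h | h
    · rw [h]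
    · exact (hlt j n h hnN).le
  have : 0 < ξ := lt_of_le_of_lt (by linarith) hξ.1
  rw [h]; exact kker_pos (by linarith) this

lemma Kd_mono (hα0 : 0 < α) (hα1 : α < 1)
    (hlt : ∀ i j : ℕ, i < j → j ≤ N → t i < t j)
    {n j : ℕ} (hj1 : 1 ≤ j) (hjn : j + 1 ≤ n) (hnN : n ≤ N) :
    Kd α t n j ≤ Kd α t n (j + 1) := by
  obtain ⟨ξ, hξ, h⟩ := Kd_rep hα0 hα1 hlt hj1 (by omega : j ≤ n) hnN
  obtain ⟨ξ', hξ', h'⟩ := Kd_rep hα0 hα1 hlt (by omega : 1 ≤ j + 1) hjn hnN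
  rw [Nat.add_sub_cancel] at hξ'
  have h2 : t (j + 1) ≤ t n := by
    rcases eq_or_lt_of_le hjn with h | h
    · rw [h]
    · exact (hlt (j + 1) n h hnN).le
  have hξ'0 : 0 < ξ' := lt_of_le_of_lt (by linarith) hξ'.1
  rw [h, h']
  exact kker_anti (by linarith) (by linarith) hξ'0 (by linarith [hξ'.2, hξ.1])

lemma Pd_diag (α : ℝ) (t : ℕ → ℝ) (n : ℕ) : Pd α t n n = 1 / Kd α t n n := by
  rw [Pd]; simp

lemma Pd_off {n i : ℕ} (h : i ≠ n) : Pd α t n i =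
    (1 / Kd α t i i) * ∑ j ∈ Finset.Ioc i n, Pd α t n j * (Kd α t j (i + 1) - Kd α t j i) := by
  rw [Pd, if_neg h]
  congr 1
  exact Finset.sum_attach (Finset.Ioc i n) (fun j => Pd α t n j * (Kd α t j (i + 1) - Kd α t j i))

lemma Pd_nonneg (hα0 : 0 < α) (hα1 : α < 1)
    (hlt : ∀ i j : ℕ, i < j → j ≤ N → t i < t j)
    {n : ℕ} (hnN : n ≤ N) : ∀ i, 1 ≤ i → i ≤ n → 0 ≤ Pd α t n i := by
  have key : ∀ d i, 1 ≤ i → i ≤ n → n - i ≤ d → 0 ≤ Pd α t n i := by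
    intro d
    induction d with
    | zero =>
      intro i h1 h2 h3
      have : i = n := by omega
      subst this
      rw [Pd_diag]
      exact (one_div_nonneg).mpr (Kd_pos hα0 hα1 hlt h1 le_rfl hnN).le
    | succ d ih =>
      intro i h1 h2 h3
      by_cases hin : i = n
      · subst hin
        rw [Pd_diag]
        exact (one_div_nonneg).mpr (Kd_pos hα0 hα1 hlt h1 le_rfl hnN).le
      · rw [Pd_off hin]
        refine mul_nonneg
          ((one_div_nonneg).mpr (Kd_pos hα0 hα1 hlt h1 le_rfl (le_trans h2 hnN)).le) ?_
        · apply Finset.sum_nonneg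
          intro j hj
          obtain ⟨hij, hjn⟩ := Finset.mem_Ioc.mp hj
          apply mul_nonneg (ih j (by omega) hjn (by omega))
          have := Kd_mono hα0 hα1 hlt (n := j) h1 (by omega) (le_trans hjn hnN)
          linarith
  intro i h1 h2
  exact key (n - i) i h1 h2 le_rfl

lemma Pd_sum_K (hα0 : 0 < α) (hα1 : α < 1)
    (hlt : ∀ i j : ℕ, i < j → j ≤ N → t i < t j)
    {n : ℕ} (hnN : n ≤ N) :
    ∀ i, 1 ≤ i → i ≤ n → ∑ j ∈ Finset.Icc i n, Pd α t n j * Kd α t j i = 1 := by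
  have key : ∀ d i, 1 ≤ i → i ≤ n → n - i ≤ d →
      ∑ j ∈ Finset.Icc i n, Pd α t n j * Kd α t j i = 1 := by
    intro d
    induction d with
    | zero =>
      intro i h1 h2 h3
      have : i = n := by omega
      subst this
      rw [Finset.Icc_self, Finset.sum_singleton, Pd_diag,
        one_div_mul_cancel (Kd_pos hα0 hα1 hlt h1 le_rfl hnN).ne']
    | succ d ih =>
      intro i h1 h2 h3
      by_cases hin : i = n
      · subst hin
        rw [Finset.Icc_self, Finset.sum_singleton, Pd_diag,
          one_div_mul_cancel (Kd_pos hα0 hα1 hlt h1 le_rfl hnN).ne']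
      · have hilt : i < n := lt_of_le_of_ne h2 hin
        have hKii : 0 < Kd α t i i := Kd_pos hα0 hα1 hlt h1 le_rfl (le_trans h2 hnN)
        rw [← Finset.Ioc_insert_left h2, Finset.sum_insert Finset.left_notMem_Ioc, Pd_off hin]
        have hstep : 1 / Kd α t i i *
            (∑ j ∈ Finset.Ioc i n, Pd α t n j * (Kd α t j (i + 1) - Kd α t j i)) * Kd α t i i
            = ∑ j ∈ Finset.Ioc i n, Pd α t n j * (Kd α t j (i + 1) - Kd α t j i) := by
          field_simp
        rw [hstep, ← Finset.sum_add_distrib,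
          Finset.sum_congr rfl (fun j hj => show
            Pd α t n j * (Kd α t j (i + 1) - Kd α t j i) + Pd α t n j * Kd α t j i
              = Pd α t n j * Kd α t j (i + 1) by ring),
          ← Finset.Icc_add_one_left_eq_Ioc]
        exact ih (i + 1) (by omega) (by omega) (by omega)
  intro i h1 h2
  exact key (n - i) i h1 h2 le_rfl

end Discrete

lemma star (hα0 : 0 < α) (hα1 : α < 1) {β : ℝ} (hβ0 : 0 < β) (hβ1 : β ≤ 1)
    (ht0 : t 0 = 0) (hlt : ∀ i j : ℕ, i < j → j ≤ N → t i < t j)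
    {j : ℕ} (hj1 : 1 ≤ j) (hjN : j ≤ N) :
    kker (1 + β - α) (t j) ≤
      ∑ i ∈ Finset.Icc 1 j, Kd α t j i * (kker (1 + β) (t i) - kker (1 + β) (t (i - 1))) := by
  have hτ : 0 < t j := by rw [← ht0]; exact hlt 0 j (by omega) hjN
  have hle : ∀ i, i ≤ j → t i ≤ t j := by
    intro i hi
    rcases eq_or_lt_of_le hi with h | h
    · rw [h]
    · exact (hlt i j h hjN).le
  have hpos : ∀ i, i ≤ j → 0 ≤ t i := by
    intro i hi
    rcases Nat.eq_zero_or_pos i with h | h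
    · rw [h, ht0]
    · rw [← ht0]; exact (hlt 0 i h (le_trans hi hjN)).le
  rw [← Finset.Ico_add_one_right_eq_Icc 1 j, Finset.sum_Ico_eq_sum_range,
    show j + 1 - 1 = j from by omega]
  rcases eq_or_lt_of_le hβ1 with hβe | hβlt
  · -- β = 1 : telescoping equality
    subst hβe
    have k2 : ∀ x : ℝ, kker 2 x = x := by
      intro x
      unfold kker
      norm_num [Real.Gamma_two, Real.rpow_one]
    have hterm : ∀ k ∈ Finset.range j,
        Kd α t j (1 + k) * (kker (1 + 1) (t (1 + k)) - kker (1 + 1) (t (1 + k - 1)))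
          = kker (2 - α) (t j - t k) - kker (2 - α) (t j - t (k + 1)) := by
      intro k hk
      have hk' := Finset.mem_range.mp hk
      have hab : t k < t (k + 1) := hlt k (k + 1) (Nat.lt_succ_self k) (by omega)
      rw [show (1:ℝ) + 1 = 2 by norm_num, show 1 + k - 1 = k from by omega,
        show 1 + k = k + 1 from by omega, k2, k2]
      unfold Kd
      rw [show k + 1 - 1 = k from by omega,
        div_mul_cancel₀ _ (sub_ne_zero.mpr hab.ne')]
    rw [Finset.sum_congr rfl hterm, Finset.sum_range_sub' (fun k => kker (2 - α) (t j - t k)) j]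
    rw [ht0, sub_zero, sub_self, kker_zero (by intro h; linarith : (2:ℝ) - α ≠ 1)]
    rw [show (1:ℝ) + 1 - α = 2 - α by ring]
    simp
  · -- β < 1 : integral comparison
    have hint : ∀ k, k < j → IntervalIntegrable
        (fun s => kker (1 - α) (t j - s) * kker β s) volume (t k) (t (k + 1)) := by
      intro k hk
      exact conv_integrable hα0 hα1 hβ0 hτ (hpos k (by omega))
        (hlt k (k + 1) (Nat.lt_succ_self k) (by omega)).le (hle (k + 1) (by omega))
    have hsplit := intervalIntegral.sum_integral_adjacent_intervals hint
    rw [ht0] at hsplit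
    have hLHS : kker (1 + β - α) (t j) =
        ∑ k ∈ Finset.range j, ∫ s in (t k)..(t (k + 1)), kker (1 - α) (t j - s) * kker β s := by
      rw [hsplit, conv_integral hα0 hα1 hβ0 hτ]
    rw [hLHS]
    apply Finset.sum_le_sum
    intro k hk
    have hk' := Finset.mem_range.mp hk
    have hab : t k < t (k + 1) := hlt k (k + 1) (Nat.lt_succ_self k) (by omega)
    refine le_trans (per_interval hα0 hα1 hβ0 hβlt.le (hpos k (by omega)) hab
      (hle (k + 1) (by omega))) (le_of_eq ?_)
    unfold Kd
    rw [show 1 + k = k + 1 from by omega, show k + 1 - 1 = k from by omega]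

/-- Lemma 3.2(c): `Σ_{j=1}^{n} P^{n,j}_α k_{1+mα-α}(t_j) ≤ k_{1+mα}(t_n)`
for every integer `0 ≤ m ≤ ⌊1/α⌋`. -/
theorem complementary_kernel_power_bound
    (α T : ℝ) (N : ℕ) (t : ℕ → ℝ)
    (hα0 : 0 < α) (hα1 : α < 1) (hT : 0 < T)
    (ht0 : t 0 = 0) (htN : t N = T)
    (hmono : ∀ j, j < N → t j < t (j + 1)) :
    ∀ n, 1 ≤ n → n ≤ N → ∀ m : ℕ, m ≤ Nat.floor (1 / α) →
      ∑ j ∈ Finset.Icc 1 n, Pd α t n j * kker (1 + (m : ℝ) * α - α) (t j)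
        ≤ kker (1 + (m : ℝ) * α) (t n) := by
  have hlt : ∀ i j : ℕ, i < j → j ≤ N → t i < t j := by
    have key : ∀ j i : ℕ, i < j → j ≤ N → t i < t j := by
      intro j
      induction j with
      | zero => intro i h _; omega
      | succ k ih =>
        intro i h hkN
        rcases Nat.lt_succ_iff_lt_or_eq.mp h with h' | h'
        · exact lt_trans (ih i h' (by omega)) (hmono k (by omega))
        · subst h'; exact hmono i (by omega)
    exact fun i j a b => key j i a b
  intro n hn1 hnN m hm
  have htn : 0 < t n := by rw [← ht0]; exact hlt 0 n (by omega) hnN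
  have hPd : ∀ j ∈ Finset.Icc 1 n, 0 ≤ Pd α t n j := by
    intro j hj
    obtain ⟨h1, h2⟩ := Finset.mem_Icc.mp hj
    exact Pd_nonneg hα0 hα1 hlt hnN j h1 h2
  rcases Nat.eq_zero_or_pos m with hm0 | hm1
  · -- m = 0
    subst hm0
    have he1 : (1:ℝ) + (0:ℕ) * α - α = 1 - α := by push_cast; ring
    have he2 : (1:ℝ) + (0:ℕ) * α = 1 := by push_cast; ring
    rw [he1, he2]
    have hk1 : kker 1 (t n) = 1 := by
      unfold kker
      rw [sub_self, Real.rpow_zero, Real.Gamma_one, div_one]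
    rw [hk1]
    have hstep : ∀ j ∈ Finset.Icc 1 n, Pd α t n j * kker (1 - α) (t j)
        ≤ Pd α t n j * Kd α t j 1 := by
      intro j hj
      obtain ⟨h1, h2⟩ := Finset.mem_Icc.mp hj
      apply mul_le_mul_of_nonneg_left ?_ (hPd j hj)
      obtain ⟨ξ, hξ, hK⟩ := Kd_rep hα0 hα1 hlt le_rfl h1 (le_trans h2 hnN)
      rw [ht0, sub_zero] at hξ
      have ht1j : t 1 ≤ t j := by
        rcases eq_or_lt_of_le h1 with h | h
        · rw [← h]
        · exact (hlt 1 j h (le_trans h2 hnN)).le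
      have hξ0 : 0 < ξ := lt_of_le_of_lt (by linarith [hξ.1]) hξ.1
      rw [hK]
      exact kker_anti (by linarith) (by linarith) hξ0 hξ.2.le
    calc ∑ j ∈ Finset.Icc 1 n, Pd α t n j * kker (1 - α) (t j)
        ≤ ∑ j ∈ Finset.Icc 1 n, Pd α t n j * Kd α t j 1 := Finset.sum_le_sum hstep
      _ = 1 := Pd_sum_K hα0 hα1 hlt hnN 1 le_rfl hn1
  · -- 1 ≤ m
    set β : ℝ := (m : ℝ) * α with hβdef
    have hβ0 : 0 < β := by
      apply mul_pos ?_ hα0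
      exact_mod_cast hm1
    have hβ1 : β ≤ 1 := by
      have hfl : (m : ℝ) ≤ 1 / α :=
        le_trans (Nat.cast_le.mpr hm) (Nat.floor_le (by positivity))
      calc β = (m : ℝ) * α := hβdef
        _ ≤ (1 / α) * α := mul_le_mul_of_nonneg_right hfl hα0.le
        _ = 1 := by field_simp
    have hstep : ∀ j ∈ Finset.Icc 1 n, Pd α t n j * kker (1 + β - α) (t j)
        ≤ Pd α t n j * ∑ i ∈ Finset.Icc 1 j,
            Kd α t j i * (kker (1 + β) (t i) - kker (1 + β) (t (i - 1))) := by
      intro j hj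
      obtain ⟨h1, h2⟩ := Finset.mem_Icc.mp hj
      exact mul_le_mul_of_nonneg_left
        (star hα0 hα1 hβ0 hβ1 ht0 hlt h1 (le_trans h2 hnN)) (hPd j hj)
    have hcomm := Finset.sum_Ico_Ico_comm 1 (n + 1)
      (fun i j => Pd α t n j * Kd α t j i * (kker (1 + β) (t i) - kker (1 + β) (t (i - 1))))
    simp only [Finset.Ico_add_one_right_eq_Icc] at hcomm
    calc ∑ j ∈ Finset.Icc 1 n, Pd α t n j * kker (1 + β - α) (t j)
        ≤ ∑ j ∈ Finset.Icc 1 n, Pd α t n j * ∑ i ∈ Finset.Icc 1 j,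
            Kd α t j i * (kker (1 + β) (t i) - kker (1 + β) (t (i - 1))) :=
          Finset.sum_le_sum hstep
      _ = ∑ j ∈ Finset.Icc 1 n, ∑ i ∈ Finset.Icc 1 j,
            Pd α t n j * Kd α t j i * (kker (1 + β) (t i) - kker (1 + β) (t (i - 1))) := by
          apply Finset.sum_congr rfl
          intro j _
          rw [Finset.mul_sum]
          exact Finset.sum_congr rfl fun i _ => by ring
      _ = ∑ i ∈ Finset.Icc 1 n, ∑ j ∈ Finset.Icc i n,
            Pd α t n j * Kd α t j i * (kker (1 + β) (t i) - kker (1 + β) (t (i - 1))) :=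
          hcomm.symm
      _ = ∑ i ∈ Finset.Icc 1 n, (∑ j ∈ Finset.Icc i n, Pd α t n j * Kd α t j i) *
            (kker (1 + β) (t i) - kker (1 + β) (t (i - 1))) := by
          exact Finset.sum_congr rfl fun i _ => by rw [Finset.sum_mul]
      _ = ∑ i ∈ Finset.Icc 1 n, (kker (1 + β) (t i) - kker (1 + β) (t (i - 1))) := by
          apply Finset.sum_congr rfl
          intro i hi
          obtain ⟨h1, h2⟩ := Finset.mem_Icc.mp hi
          rw [Pd_sum_K hα0 hα1 hlt hnN i h1 h2, one_mul]
      _ = kker (1 + β) (t n) := by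
          rw [← Finset.Ico_add_one_right_eq_Icc 1 n, Finset.sum_Ico_eq_sum_range,
            show n + 1 - 1 = n from by omega]
          have hre : ∀ i ∈ Finset.range n,
              kker (1 + β) (t (1 + i)) - kker (1 + β) (t (1 + i - 1))
                = kker (1 + β) (t (i + 1)) - kker (1 + β) (t i) := by
            intro i _
            rw [show 1 + i - 1 = i from by omega, show 1 + i = i + 1 from by omega]
          rw [Finset.sum_congr rfl hre,
            Finset.sum_range_sub (fun i => kker (1 + β) (t i)) n, ht0,
            kker_zero (by intro h; linarith : (1:ℝ) + β ≠ 1), sub_zero]
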